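/- Let f be a Schwartz function on ℝⁿ and let f̂(ξ) = ∫ e^{−2πi x·ξ} f(x) dx be its Fourier transform. Let l ∈ ℕ, ε ∈ [0, 1], β = l + ε, and fix a coordinate index i ∈ {1, …, n}. Then (2π)^β·‖|x_i|^β f‖_{L²(ℝⁿ)} ≤ ‖∂_i^l f̂‖_{L²(ℝⁿ)}^{1−ε}·‖∂_i^{l+1} f̂‖_{L²(ℝⁿ)}^{ε}, where |x_i|^β f denotes the function x ↦ |x_i|^β f(x) and ∂_i denotes the partial derivative with respect to the i-th coordinate. -/

import Mathlib

noncomputable section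

open MeasureTheory

/-- The Fourier transform `f̂(ξ) = ∫ e^{−2πi x·ξ} f(x) dx`. -/
def fhat {n : ℕ} (f : EuclideanSpace ℝ (Fin n) → ℂ) (ξ : EuclideanSpace ℝ (Fin n)) : ℂ :=
  ∫ x : EuclideanSpace ℝ (Fin n),
    Complex.exp (-(2 * Real.pi * Complex.I * ((inner ℝ x ξ : ℝ) : ℂ))) * f x

/-- The `l`-fold partial derivative `∂_i^l`. -/
def iterD {n : ℕ} (i : Fin n) (l : ℕ) (g : EuclideanSpace ℝ (Fin n) → ℂ) :
    EuclideanSpace ℝ (Fin n) → ℂ :=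
  (fun h (x : EuclideanSpace ℝ (Fin n)) => fderiv ℝ h x (EuclideanSpace.single i 1))^[l] g

namespace Stmt15Aux

open Real Complex SchwartzMap
open scoped FourierTransform ComplexConjugate

variable {n : ℕ}
local notation "V" => EuclideanSpace ℝ (Fin n)

lemma fourier_conj (u : (V) → ℂ) (x : V) :
    𝓕 (fun v => conj (u v)) x = conj (𝓕⁻ u x) := by
  rw [Real.fourier_eq, Real.fourierInv_eq, ← integral_conj]
  congr 1 with v
  simp only [Circle.smul_def, smul_eq_mul, map_mul, Real.fourierChar_apply, ← Complex.exp_conj,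
    Complex.conj_I, Complex.conj_ofReal]
  congr 2
  push_cast
  ring

lemma integrable_conj' {u : (V) → ℂ} (h : Integrable u) :
    Integrable (fun x => conj (u x)) := by
  refine ⟨Complex.continuous_conj.comp_aestronglyMeasurable h.1, ?_⟩
  simpa [HasFiniteIntegral] using h.2

lemma planch (g : SchwartzMap (V) ℂ) :
    ∫ ξ : V, ‖𝓕 (⇑g) ξ‖ ^ 2 = ∫ x : V, ‖g x‖ ^ 2 := by
  have hG : Integrable (𝓕 ⇑g) := (fourierTransformCLM ℂ g).integrable
  have hflip : (innerₗ (V)).flip = innerₗ (V) := by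
    apply LinearMap.ext; intro x; apply LinearMap.ext; intro y
    simpa using real_inner_comm x y
  have key := VectorFourier.integral_fourierIntegral_smul_eq_flip (μ := (volume : Measure V))
    (ν := (volume : Measure V)) (L := innerₗ (V)) (F := ℂ)
    Real.continuous_fourierChar continuous_inner g.integrable
    (f := ⇑g) (g := fun ξ => conj (𝓕 (⇑g) ξ)) (integrable_conj' hG)
  rw [hflip] at key
  have h1 : (∫ ξ : V, 𝓕 (⇑g) ξ • conj (𝓕 (⇑g) ξ)) = ((∫ ξ : V, ‖𝓕 (⇑g) ξ‖ ^ 2 : ℝ) : ℂ) := by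
    calc ∫ ξ : V, 𝓕 (⇑g) ξ • conj (𝓕 (⇑g) ξ)
        = ∫ ξ : V, ((‖𝓕 (⇑g) ξ‖ ^ 2 : ℝ) : ℂ) := by
          congr 1 with ξ; simp [smul_eq_mul, Complex.mul_conj']
      _ = _ := integral_ofReal
  have h2 : (∫ x : V, g x • 𝓕 (fun ξ => conj (𝓕 (⇑g) ξ)) x) = ((∫ x : V, ‖g x‖ ^ 2 : ℝ) : ℂ) := by
    calc ∫ x : V, g x • 𝓕 (fun ξ => conj (𝓕 (⇑g) ξ)) x
        = ∫ x : V, ((‖g x‖ ^ 2 : ℝ) : ℂ) := by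
          congr 1 with x
          rw [fourier_conj, Continuous.fourierInv_fourier_eq g.continuous g.integrable hG]
          simp [smul_eq_mul, Complex.mul_conj']
      _ = _ := integral_ofReal
  have h3 : ((∫ ξ : V, ‖𝓕 (⇑g) ξ‖ ^ 2 : ℝ) : ℂ) = ((∫ x : V, ‖g x‖ ^ 2 : ℝ) : ℂ) := by
    rw [← h1, ← h2]; exact key
  exact_mod_cast h3

/-- multiplication by the `i`-th coordinate, as a map on Schwartz space -/
def Pc (i : Fin n) : SchwartzMap V ℂ →L[ℝ] SchwartzMap V ℂ :=
  SchwartzMap.bilinLeftCLM (ContinuousLinearMap.mul ℝ ℂ)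
    ((Complex.ofRealCLM.comp (EuclideanSpace.proj i : V →L[ℝ] ℝ)).hasTemperateGrowth)

lemma integrable_mul_norm (g : SchwartzMap (V) ℂ) :
    Integrable (fun v : V => ‖v‖ * ‖g v‖) := by
  simpa using g.integrable_pow_mul (volume) 1

lemma fourier_deriv (i : Fin n) (g : SchwartzMap (V) ℂ) (x : V) :
    fderiv ℝ (𝓕 ⇑g) x (EuclideanSpace.single i 1)
      = (-(2 * π * Complex.I)) • 𝓕 ⇑(Pc i g) x := by
  have hg1 : Integrable (fun v : V => ‖v‖ * ‖g v‖) := integrable_mul_norm g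
  rw [Real.fderiv_fourier g.integrable hg1]
  have hF : Integrable (fun v : V => VectorFourier.fourierSMulRight (innerSL ℝ) (⇑g) v) := by
    refine Integrable.mono' ((hg1.const_mul (2 * π * ‖(innerSL ℝ (E := V))‖)))
      (g.continuous.aestronglyMeasurable.fourierSMulRight) ?_
    filter_upwards with v
    calc ‖VectorFourier.fourierSMulRight (innerSL ℝ) (⇑g) v‖
        ≤ 2 * π * ‖(innerSL ℝ (E := V))‖ * ‖v‖ * ‖g v‖ :=
          VectorFourier.norm_fourierSMulRight_le _ _ _
      _ = 2 * π * ‖(innerSL ℝ (E := V))‖ * (‖v‖ * ‖g v‖) := by ring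
  have heval := VectorFourier.fourierIntegral_continuousLinearMap_apply
    (μ := (volume : Measure V)) (L := innerSL ℝ (E := V)) (E := ℂ)
    (f := fun v : V => VectorFourier.fourierSMulRight (innerSL ℝ) (⇑g) v)
    (a := EuclideanSpace.single i 1) (w := x) Real.continuous_fourierChar hF
  rw [show (𝓕 (VectorFourier.fourierSMulRight (innerSL ℝ) ⇑g) x (EuclideanSpace.single i 1))
      = VectorFourier.fourierIntegral 𝐞 volume (innerSL ℝ (E := V)).toLinearMap₁₂
        (fun v : V => VectorFourier.fourierSMulRight (innerSL ℝ) (⇑g) v) x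
        (EuclideanSpace.single i 1) from rfl,
    heval]
  have heq : (fun v : V =>
        VectorFourier.fourierSMulRight (innerSL ℝ) (⇑g) v (EuclideanSpace.single i 1))
      = fun v : V => (-(2 * π * Complex.I)) • (Pc i g) v := by
    ext v
    rw [VectorFourier.fourierSMulRight_apply]
    have : (innerSL ℝ) v (EuclideanSpace.single i (1:ℝ)) = v i := by
      simp [EuclideanSpace.inner_single_right, real_inner_comm]
    rw [this]
    have hPc : (Pc i g) v = g v * ((v i : ℝ) : ℂ) := rfl
    simp only [smul_eq_mul, hPc, Complex.real_smul]
    ring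
  rw [heq]
  show VectorFourier.fourierIntegral 𝐞 volume (innerₗ V)
      (fun v : V => (-(2 * π * Complex.I)) • (Pc i g) v) x = _
  rw [VectorFourier.fourierIntegral]
  simp only [smul_comm _ ((-(2 * π * Complex.I)))]
  rw [integral_smul]
  rfl

lemma iterD_fourier (i : Fin n) (g : SchwartzMap (V) ℂ) (l : ℕ) :
    iterD i l (𝓕 ⇑g) = fun ξ : V =>
      (-(2 * π * Complex.I)) ^ l • 𝓕 ⇑((fun h => Pc i h)^[l] g) ξ := by
  induction l with
  | zero => simp [iterD]
  | succ l ih =>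
    have hstep : iterD i (l + 1) (𝓕 ⇑g)
        = fun x : V => fderiv ℝ (iterD i l (𝓕 ⇑g)) x (EuclideanSpace.single i 1) := by
      rw [iterD, Function.iterate_succ_apply']; rfl
    set gl := (fun h => Pc i h)^[l] g with hgl
    have hdiff : Differentiable ℝ (𝓕 ⇑gl) :=
      Real.differentiable_fourier gl.integrable (integrable_mul_norm gl)
    ext x
    rw [hstep, ih]
    show fderiv ℝ (fun ξ : V => (-(2 * π * Complex.I)) ^ l • 𝓕 ⇑gl ξ) x
      (EuclideanSpace.single i 1) = _
    have : fderiv ℝ (fun ξ : V => (-(2 * π * Complex.I)) ^ l • 𝓕 ⇑gl ξ) x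
        = (-(2 * π * Complex.I)) ^ l • fderiv ℝ (𝓕 ⇑gl) x := by
      exact fderiv_fun_const_smul (hdiff x) _
    rw [this]
    simp only [ContinuousLinearMap.coe_smul', Pi.smul_apply]
    rw [fourier_deriv i gl x, smul_smul, Function.iterate_succ_apply', ← pow_succ]

lemma norm_Pc_iter (i : Fin n) (g : SchwartzMap (V) ℂ) (l : ℕ) (x : V) :
    ‖((fun h => Pc i h)^[l] g) x‖ = |x i| ^ l * ‖g x‖ := by
  induction l with
  | zero => simp
  | succ l ih =>
    rw [Function.iterate_succ_apply']
    have hPc : (Pc i ((fun h => Pc i h)^[l] g)) x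
        = ((fun h => Pc i h)^[l] g) x * ((x i : ℝ) : ℂ) := rfl
    rw [hPc, norm_mul, ih, Complex.norm_real, Real.norm_eq_abs, pow_succ]
    ring

lemma fhat_eq (f : SchwartzMap (V) ℂ) : fhat (⇑f) = 𝓕 ⇑f := by
  ext ξ
  rw [fhat, Real.fourier_eq']
  congr 1 with v
  rw [smul_eq_mul]
  congr 1
  push_cast
  ring

lemma int_iterD (i : Fin n) (f : SchwartzMap (V) ℂ) (k : ℕ) :
    ∫ ξ : V, ‖iterD i k (fhat (⇑f)) ξ‖ ^ 2
      = ((2 * π) ^ k) ^ 2 * ∫ x : V, (|x i| ^ k * ‖f x‖) ^ 2 := by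
  rw [fhat_eq, iterD_fourier]
  set gl := (fun h => Pc i h)^[k] f with hgl
  have h1 : ∀ ξ : V, ‖(-(2 * π * Complex.I)) ^ k • 𝓕 ⇑gl ξ‖ ^ 2
      = ((2 * π) ^ k) ^ 2 * ‖𝓕 ⇑gl ξ‖ ^ 2 := by
    intro ξ
    rw [norm_smul, norm_pow, mul_pow]
    congr 3
    simp [norm_mul, Complex.norm_real, _root_.abs_of_nonneg Real.pi_nonneg, Real.pi_nonneg]
  calc ∫ ξ : V, ‖(-(2 * π * Complex.I)) ^ k • 𝓕 ⇑gl ξ‖ ^ 2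
      = ∫ ξ : V, ((2 * π) ^ k) ^ 2 * ‖𝓕 ⇑gl ξ‖ ^ 2 := by congr 1 with ξ; exact h1 ξ
    _ = ((2 * π) ^ k) ^ 2 * ∫ ξ : V, ‖𝓕 ⇑gl ξ‖ ^ 2 := integral_const_mul _ _
    _ = ((2 * π) ^ k) ^ 2 * ∫ x : V, ‖gl x‖ ^ 2 := by rw [planch]
    _ = ((2 * π) ^ k) ^ 2 * ∫ x : V, (|x i| ^ k * ‖f x‖) ^ 2 := by
        have heq2 : (∫ x : V, ‖gl x‖ ^ 2) = ∫ x : V, (|x i| ^ k * ‖f x‖) ^ 2 := by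
          congr 1 with x
          rw [hgl, norm_Pc_iter]
        rw [heq2]

lemma integrable_sq_schwartz (g : SchwartzMap (V) ℂ) :
    Integrable (fun x : V => ‖g x‖ ^ 2) := by
  obtain ⟨C, hC⟩ : ∃ C, ∀ x : V, ‖g x‖ ≤ C := ⟨_, fun x => g.norm_le_seminorm ℝ x⟩
  refine Integrable.mono' (g.integrable.norm.const_mul C)
    ((g.continuous.norm.pow 2).aestronglyMeasurable) ?_
  filter_upwards with x
  rw [Real.norm_eq_abs, _root_.abs_of_nonneg (by positivity : (0:ℝ) ≤ ‖g x‖ ^ 2), pow_two]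
  exact mul_le_mul_of_nonneg_right (hC x) (norm_nonneg _)

end Stmt15Aux
section Main
open Real
open scoped FourierTransform

namespace Stmt15Aux

variable {n : ℕ}
local notation "V" => EuclideanSpace ℝ (Fin n)

lemma rpow_interp {a b ε : ℝ} (ha : 0 ≤ a) (hb : 0 ≤ b) (l : ℕ) (hε0 : 0 < ε) (hε1 : ε < 1) :
    (a ^ ((l : ℝ) + ε) * b) ^ 2
      = ((a ^ l * b) ^ 2) ^ (1 - ε) * ((a ^ (l + 1) * b) ^ 2) ^ ε := by
  rcases eq_or_lt_of_le ha with rfl | ha'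
  · rw [Real.zero_rpow (by positivity : ((l:ℝ) + ε) ≠ 0)]
    rw [show ((0:ℝ) ^ (l+1) * b) = 0 by simp]
    simp [Real.zero_rpow hε0.ne']
  · rcases eq_or_lt_of_le hb with rfl | hb'
    · simp [Real.zero_rpow (ne_of_gt (by linarith : (0:ℝ) < 1 - ε))]
    · have key0 : (a ^ ((l:ℝ) + ε) * b) ^ 2 = a ^ (((l:ℝ) + ε) * 2) * b ^ (2:ℝ) := by
        rw [mul_pow, ← Real.rpow_natCast (a ^ ((l:ℝ) + ε)) 2, ← Real.rpow_mul ha,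
          ← Real.rpow_natCast b 2]
        norm_num
      have key1 : ((a ^ l * b) ^ 2) ^ (1 - ε)
          = a ^ ((l:ℝ) * 2 * (1 - ε)) * b ^ (2 * (1 - ε)) := by
        rw [mul_pow, ← Real.rpow_natCast (a ^ l) 2, ← Real.rpow_natCast a l,
          ← Real.rpow_mul ha, ← Real.rpow_natCast b 2,
          Real.mul_rpow (Real.rpow_nonneg ha _) (Real.rpow_nonneg hb _),
          ← Real.rpow_mul ha, ← Real.rpow_mul hb]
        norm_num
      have key2 : ((a ^ (l + 1) * b) ^ 2) ^ ε
          = a ^ (((l:ℝ) + 1) * 2 * ε) * b ^ (2 * ε) := by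
        rw [mul_pow, ← Real.rpow_natCast (a ^ (l + 1)) 2, ← Real.rpow_natCast a (l + 1),
          ← Real.rpow_mul ha, ← Real.rpow_natCast b 2,
          Real.mul_rpow (Real.rpow_nonneg ha _) (Real.rpow_nonneg hb _),
          ← Real.rpow_mul ha, ← Real.rpow_mul hb]
        push_cast
        norm_num
      rw [key0, key1, key2, mul_mul_mul_comm, ← Real.rpow_add ha', ← Real.rpow_add hb']
      congr 1
      · congr 1; ring
      · congr 1; ring

lemma memLp_aux (i : Fin n) (f : SchwartzMap (V) ℂ) (k : ℕ) {δ : ℝ} (hδ : 0 < δ) :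
    MemLp (fun x : V => ((|x i| ^ k * ‖f x‖) ^ 2) ^ δ) (ENNReal.ofReal (1/δ)) volume := by
  set g := (fun h => Stmt15Aux.Pc i h)^[k] f with hg
  have heq : (fun x : V => ((|x i| ^ k * ‖f x‖) ^ 2) ^ δ) = fun x => ‖g x‖ ^ (2 * δ) := by
    funext x
    rw [← Stmt15Aux.norm_Pc_iter i f k x, ← Real.rpow_natCast (‖g x‖) 2,
      ← Real.rpow_mul (norm_nonneg _)]
    norm_num
  have hg2 : MemLp (⇑g) 2 volume :=
    (memLp_two_iff_integrable_sq_norm g.continuous.aestronglyMeasurable).2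
      (Stmt15Aux.integrable_sq_schwartz g)
  rw [heq]
  refine ⟨(g.continuous.norm.rpow_const (fun x => Or.inr (by positivity))).aestronglyMeasurable, ?_⟩
  rw [eLpNorm_norm_rpow _ (by positivity : (0:ℝ) < 2 * δ)]
  have h2 : ENNReal.ofReal (1/δ) * ENNReal.ofReal (2 * δ) = 2 := by
    rw [← ENNReal.ofReal_mul (by positivity)]
    rw [show 1/δ * (2 * δ) = 2 by field_simp]
    simp [ENNReal.ofReal_ofNat]
  rw [h2]
  exact ENNReal.rpow_lt_top_of_nonneg (by positivity) hg2.2.ne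

end Stmt15Aux

/-- For a Schwartz function `f` on `ℝⁿ`, `β = l + ε` with `ε ∈ [0,1]`:
`(2π)^β ‖|x_i|^β f‖₂ ≤ ‖∂_i^l f̂‖₂^{1−ε} ‖∂_i^{l+1} f̂‖₂^ε`. -/
theorem stmt15 {n : ℕ} (f : SchwartzMap (EuclideanSpace ℝ (Fin n)) ℂ)
    (l : ℕ) (ε : ℝ) (hε : ε ∈ Set.Icc (0 : ℝ) 1) (β : ℝ) (hβ : β = l + ε) (i : Fin n) :
    (2 * Real.pi) ^ β *
        (∫ x : EuclideanSpace ℝ (Fin n), (|x i| ^ β * ‖f x‖) ^ 2) ^ ((1 : ℝ) / 2)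
      ≤ ((∫ ξ : EuclideanSpace ℝ (Fin n), ‖iterD i l (fhat (⇑f)) ξ‖ ^ 2) ^ ((1 : ℝ) / 2))
            ^ (1 - ε) *
        ((∫ ξ : EuclideanSpace ℝ (Fin n), ‖iterD i (l + 1) (fhat (⇑f)) ξ‖ ^ 2) ^ ((1 : ℝ) / 2))
            ^ ε := by
  obtain ⟨hε0, hε1⟩ := hε
  have h2π : (0:ℝ) < 2 * π := by positivity
  set J : ℕ → ℝ := fun k => ∫ x : EuclideanSpace ℝ (Fin n), (|x i| ^ k * ‖f x‖) ^ 2 with hJ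
  have hJ0 : ∀ k, 0 ≤ J k := fun k => integral_nonneg fun x => by positivity
  have hiter : ∀ k, (∫ ξ : EuclideanSpace ℝ (Fin n), ‖iterD i k (fhat (⇑f)) ξ‖ ^ 2)
      = ((2 * π) ^ k) ^ 2 * J k := fun k => Stmt15Aux.int_iterD i f k
  have key : (∫ x : EuclideanSpace ℝ (Fin n), (|x i| ^ β * ‖f x‖) ^ 2)
      ≤ J l ^ (1 - ε) * J (l + 1) ^ ε := by
    rcases eq_or_lt_of_le hε0 with h0 | h0
    · -- ε = 0
      have hβ' : β = (l:ℝ) := by rw [hβ, ← h0, add_zero]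
      have hptw : (fun x : EuclideanSpace ℝ (Fin n) => (|x i| ^ β * ‖f x‖) ^ 2)
          = fun x => (|x i| ^ l * ‖f x‖) ^ 2 := by
        funext x; rw [hβ', Real.rpow_natCast]
      rw [hptw, ← h0, Real.rpow_zero, sub_zero, Real.rpow_one, mul_one]
    · rcases eq_or_lt_of_le hε1 with h1 | h1
      · -- ε = 1
        have hβ' : β = ((l + 1 : ℕ):ℝ) := by rw [hβ, h1]; push_cast; ring
        have hptw : (fun x : EuclideanSpace ℝ (Fin n) => (|x i| ^ β * ‖f x‖) ^ 2)
            = fun x => (|x i| ^ (l + 1) * ‖f x‖) ^ 2 := by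
          funext x; rw [hβ', Real.rpow_natCast]
        rw [hptw, h1, sub_self, Real.rpow_zero, Real.rpow_one, one_mul]
      · -- 0 < ε < 1 : Hölder
        have h1ε : (0:ℝ) < 1 - ε := by linarith
        have hpq : Real.HolderConjugate (1/(1-ε)) (1/ε) := by
          refine Real.holderConjugate_iff.mpr ⟨?_, ?_⟩
          · rw [lt_div_iff₀ h1ε]; linarith
          · rw [one_div, one_div, inv_inv, inv_inv]; ring
        have hFnn : 0 ≤ᵐ[volume]
            (fun x : EuclideanSpace ℝ (Fin n) => ((|x i| ^ l * ‖f x‖) ^ 2) ^ (1 - ε)) :=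
          Filter.Eventually.of_forall fun x => by positivity
        have hGnn : 0 ≤ᵐ[volume]
            (fun x : EuclideanSpace ℝ (Fin n) => ((|x i| ^ (l+1) * ‖f x‖) ^ 2) ^ ε) :=
          Filter.Eventually.of_forall fun x => by positivity
        have hold := integral_mul_le_Lp_mul_Lq_of_nonneg hpq hFnn hGnn
          (Stmt15Aux.memLp_aux i f l h1ε) (Stmt15Aux.memLp_aux i f (l+1) h0)
        rw [one_div_one_div, one_div_one_div] at hold
        have e1 : (fun x : EuclideanSpace ℝ (Fin n) =>
            (((|x i| ^ l * ‖f x‖) ^ 2) ^ (1 - ε)) * (((|x i| ^ (l+1) * ‖f x‖) ^ 2) ^ ε))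
            = fun x => (|x i| ^ β * ‖f x‖) ^ 2 := by
          funext x
          rw [hβ, ← Stmt15Aux.rpow_interp (abs_nonneg _) (norm_nonneg _) l h0 h1]
        have e2 : (fun x : EuclideanSpace ℝ (Fin n) =>
            ((((|x i| ^ l * ‖f x‖) ^ 2) ^ (1 - ε)) ^ (1/(1-ε))))
            = fun x => (|x i| ^ l * ‖f x‖) ^ 2 := by
          funext x
          rw [← Real.rpow_mul (by positivity), mul_one_div_cancel h1ε.ne', Real.rpow_one]
        have e3 : (fun x : EuclideanSpace ℝ (Fin n) =>
            ((((|x i| ^ (l+1) * ‖f x‖) ^ 2) ^ ε) ^ (1/ε)))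
            = fun x => (|x i| ^ (l+1) * ‖f x‖) ^ 2 := by
          funext x
          rw [← Real.rpow_mul (by positivity), mul_one_div_cancel h0.ne', Real.rpow_one]
        rw [show (∫ x : EuclideanSpace ℝ (Fin n),
            (((|x i| ^ l * ‖f x‖) ^ 2) ^ (1 - ε)) * (((|x i| ^ (l+1) * ‖f x‖) ^ 2) ^ ε))
            = ∫ x : EuclideanSpace ℝ (Fin n), (|x i| ^ β * ‖f x‖) ^ 2 by rw [e1]] at hold
        rw [show (∫ x : EuclideanSpace ℝ (Fin n),
            ((((|x i| ^ l * ‖f x‖) ^ 2) ^ (1 - ε)) ^ (1/(1-ε))))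
            = J l by rw [e2]] at hold
        rw [show (∫ x : EuclideanSpace ℝ (Fin n),
            ((((|x i| ^ (l+1) * ‖f x‖) ^ 2) ^ ε) ^ (1/ε)))
            = J (l+1) by rw [e3]] at hold
        exact hold
  have step2 : ∀ k : ℕ, (((2 * π) ^ k) ^ 2 * J k) ^ ((1:ℝ)/2)
      = (2 * π) ^ k * (J k) ^ ((1:ℝ)/2) := by
    intro k
    rw [Real.mul_rpow (by positivity) (hJ0 k)]
    congr 1
    rw [← Real.rpow_natCast ((2 * π) ^ k) 2, ← Real.rpow_mul (by positivity)]
    norm_num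
  have hL1 : (0:ℝ) ≤ ∫ x : EuclideanSpace ℝ (Fin n), (|x i| ^ β * ‖f x‖) ^ 2 :=
    integral_nonneg fun x => by positivity
  calc (2 * Real.pi) ^ β *
        (∫ x : EuclideanSpace ℝ (Fin n), (|x i| ^ β * ‖f x‖) ^ 2) ^ ((1 : ℝ) / 2)
      ≤ (2 * Real.pi) ^ β * (J l ^ (1 - ε) * J (l + 1) ^ ε) ^ ((1:ℝ)/2) := by
        apply mul_le_mul_of_nonneg_left _ (Real.rpow_nonneg h2π.le β)
        exact Real.rpow_le_rpow hL1 key (by norm_num)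
    _ = ((((2 * π) ^ l) ^ 2 * J l) ^ ((1:ℝ)/2)) ^ (1 - ε) *
        ((((2 * π) ^ (l+1)) ^ 2 * J (l+1)) ^ ((1:ℝ)/2)) ^ ε := by
        rw [step2 l, step2 (l+1)]
        rw [Real.mul_rpow (Real.rpow_nonneg (hJ0 l) _) (Real.rpow_nonneg (hJ0 (l+1)) _),
          Real.mul_rpow (by positivity) (Real.rpow_nonneg (hJ0 l) _),
          Real.mul_rpow (by positivity) (Real.rpow_nonneg (hJ0 (l+1)) _),
          ← Real.rpow_mul (hJ0 l), ← Real.rpow_mul (hJ0 (l+1)),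
          ← Real.rpow_mul (hJ0 l), ← Real.rpow_mul (hJ0 (l+1)),
          ← Real.rpow_natCast (2 * π) l, ← Real.rpow_natCast (2 * π) (l+1),
          ← Real.rpow_mul h2π.le, ← Real.rpow_mul h2π.le,
          mul_mul_mul_comm, ← Real.rpow_add h2π]
        rw [show (l:ℝ) * (1 - ε) + (((l:ℕ) + 1 : ℕ):ℝ) * ε = β by rw [hβ]; push_cast; ring]
        rw [show ((1:ℝ)/2) * (1 - ε) = (1 - ε) * ((1:ℝ)/2) from mul_comm _ _,
          show ((1:ℝ)/2) * ε = ε * ((1:ℝ)/2) from mul_comm _ _]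
    _ = _ := by rw [hiter l, hiter (l+1)]
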